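/- Anti-holomorphic Koenigs linearization: Let z₀ ∈ ℂ, let g be complex analytic at conj z₀ with g(conj z₀) = z₀, so that f(z) = g(conj z) is an anti-analytic map with fixed point z₀, and let L = |deriv g (conj z₀)| be its real multiplier. If L ≠ 0 and L ≠ 1, then there exists a function φ : ℂ → ℂ, complex analytic at z₀, with φ(z₀) = 0 and |deriv φ z₀| = 1, such that φ(f(z)) = L · conj(φ(z)) for all z in some neighborhood of z₀. -/

import Mathlib

open Complex Filter

open ComplexConjugate Asymptotics Metric


lemma hasDerivAt_conjconj {h : ℂ → ℂ} {d w : ℂ} (hd : HasDerivAt h d w) :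
    HasDerivAt (fun z => conj (h (conj z))) (conj d) (conj w) := by
  rw [hasDerivAt_iff_isLittleO] at hd ⊢
  have hc : Filter.Tendsto (fun z : ℂ => conj z) (nhds (conj w)) (nhds w) := by
    simpa using (Complex.continuous_conj.tendsto (conj w))
  have h1 := hd.comp_tendsto hc
  have h2 : (fun z : ℂ => ‖h (conj z) - h w - (conj z - w) • d‖)
      =o[nhds (conj w)] fun z => ‖conj z - w‖ := h1.norm_norm
  have h3 := h2.congr' (f₂ := fun z : ℂ =>
      ‖conj (h (conj z)) - conj (h (conj (conj w))) - (z - conj w) • conj d‖)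
      (g₂ := fun z : ℂ => ‖z - conj w‖) ?_ ?_
  · exact (isLittleO_norm_norm (α := ℂ)).mp h3
  · filter_upwards with z
    simp only [conj_conj, smul_eq_mul]
    rw [show conj (h (conj z)) - conj (h w) - (z - conj w) * conj d
      = conj (h (conj z) - h w - (conj z - w) * d) by simp [map_sub, map_mul]]
    rw [RCLike.norm_conj]
  · filter_upwards with z
    rw [show z - conj w = conj (conj z - w) by simp [map_sub], RCLike.norm_conj]

lemma analyticAt_conjconj {h : ℂ → ℂ} {w : ℂ} (hh : AnalyticAt ℂ h w) :
    AnalyticAt ℂ (fun z => conj (h (conj z))) (conj w) := by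
  rw [analyticAt_iff_eventually_differentiableAt] at hh ⊢
  have hc : Filter.Tendsto (fun z : ℂ => conj z) (nhds (conj w)) (nhds w) := by
    simpa using (Complex.continuous_conj.tendsto (conj w))
  filter_upwards [hc.eventually hh] with z hz
  have := (hasDerivAt_conjconj hz.hasDerivAt).differentiableAt
  simpa using this

lemma deriv_conjconj {h : ℂ → ℂ} {w : ℂ} (hh : DifferentiableAt ℂ h w) :
    deriv (fun z => conj (h (conj z))) (conj w) = conj (deriv h w) :=
  (hasDerivAt_conjconj hh.hasDerivAt).deriv


set_option maxHeartbeats 1000000 in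
lemma koenigs0 (F : ℂ → ℂ) (hF : AnalyticAt ℂ F 0) (h0 : F 0 = 0)
    (hμ0 : deriv F 0 ≠ 0) (hμ1 : ‖deriv F 0‖ < 1) :
    ∃ ψ : ℂ → ℂ, AnalyticAt ℂ ψ 0 ∧ ψ 0 = 0 ∧ deriv ψ 0 = 1 ∧
      ∀ᶠ z in nhds 0, ψ (F z) = deriv F 0 * ψ z := by
  set μ := deriv F 0 with hμdef
  set a := ‖μ‖ with hadef
  have ha0 : 0 < a := norm_pos_iff.mpr hμ0
  have ha1 : a < 1 := hμ1
  set ρ := (a + Real.sqrt a) / 2 with hρdef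
  have hsq1 : Real.sqrt a < 1 := by
    rw [show (1:ℝ) = Real.sqrt 1 by simp]
    exact Real.sqrt_lt_sqrt ha0.le ha1
  have hsq : a < Real.sqrt a := by
    nlinarith [Real.sq_sqrt ha0.le, Real.sqrt_pos.mpr ha0]
  have haρ : a < ρ := by rw [hρdef]; linarith
  have hρ0 : 0 < ρ := lt_trans ha0 haρ
  have hρ1 : ρ < 1 := by rw [hρdef]; linarith
  have hρ2a : ρ ^ 2 < a := by
    have h : ρ < Real.sqrt a := by rw [hρdef]; linarith
    nlinarith [Real.sq_sqrt ha0.le]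
  -- Taylor estimate : F z - μ z = O(z²)
  obtain ⟨p, hp⟩ := hF
  have hpc0 : p.coeff 0 = 0 := by
    have h := hp.coeff_zero (fun _ => 1)
    rw [h0] at h
    exact h
  have hpc1 : p.coeff 1 = μ := hp.deriv.symm
  have hE : (fun z : ℂ => F z - μ * z) =O[nhds 0] fun z => ‖z‖ ^ 2 := by
    have h2 := hp.isBigO_sub_partialSum_pow 2
    refine h2.congr' ?_ (EventuallyEq.rfl)
    filter_upwards with z
    simp [FormalMultilinearSeries.partialSum, Finset.sum_range_succ,
      FormalMultilinearSeries.apply_eq_pow_smul_coeff, hpc0, hpc1, smul_eq_mul, mul_comm]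
  obtain ⟨C₀, hC₀⟩ := isBigO_iff.mp hE
  set C := max C₀ 1 with hCdef
  have hC1 : 0 < C := lt_of_lt_of_le one_pos (le_max_right _ _)
  have hCb : ∀ᶠ z in nhds (0:ℂ), ‖F z - μ * z‖ ≤ C * ‖z‖ ^ 2 := by
    filter_upwards [hC₀] with z hz
    have hz' : ‖F z - μ * z‖ ≤ C₀ * ‖z‖ ^ 2 := by
      simpa [Real.norm_eq_abs, _root_.abs_of_nonneg (by positivity : (0:ℝ) ≤ ‖z‖^2)] using hz
    have h2 : (0:ℝ) ≤ ‖z‖ ^ 2 := by positivity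
    nlinarith [le_max_left C₀ 1]
  have hFan : ∀ᶠ z in nhds (0:ℂ), AnalyticAt ℂ F z := hp.analyticAt.eventually_analyticAt
  obtain ⟨ε, hε0, hball⟩ := Metric.eventually_nhds_iff.mp (hCb.and hFan)
  set r := min (ε / 2) ((ρ - a) / C) with hrdef
  have hr0 : 0 < r := lt_min (by linarith) (div_pos (by linarith) hC1)
  have hrC : C * r ≤ ρ - a := by
    have h : r ≤ (ρ - a) / C := min_le_right _ _
    calc C * r ≤ C * ((ρ - a)/C) := by nlinarith
      _ = ρ - a := by field_simp
  have hna : ‖μ‖ = a := by rw [hadef]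
  clear_value a ρ C r
  have hrball : ∀ z ∈ closedBall (0:ℂ) r, ‖F z - μ * z‖ ≤ C * ‖z‖ ^ 2 ∧ AnalyticAt ℂ F z := by
    intro z hz
    apply hball
    rw [mem_closedBall] at hz
    calc dist z 0 ≤ r := hz
      _ ≤ ε/2 := by rw [hrdef]; exact min_le_left _ _
      _ < ε := by linarith
  -- contraction
  have hnorm : ∀ z ∈ closedBall (0:ℂ) r, ‖z‖ ≤ r := by
    intro z hz; rw [mem_closedBall, dist_zero_right] at hz; exact hz
  have hcontr : ∀ z ∈ closedBall (0:ℂ) r, ‖F z‖ ≤ ρ * ‖z‖ := by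
    intro z hz
    have h1 := (hrball z hz).1
    have h2 : ‖z‖ ≤ r := hnorm z hz
    have h3 : ‖F z‖ ≤ ‖μ * z‖ + ‖F z - μ * z‖ := by
      calc ‖F z‖ = ‖μ * z + (F z - μ * z)‖ := by ring_nf
        _ ≤ _ := norm_add_le _ _
    have h4 : ‖μ * z‖ = a * ‖z‖ := by rw [norm_mul, hna]
    have h5 : ‖z‖^2 ≤ r * ‖z‖ := by nlinarith [norm_nonneg z]
    have h6 : ‖F z - μ*z‖ ≤ C * (r * ‖z‖) :=
      h1.trans (by nlinarith)
    nlinarith [norm_nonneg z]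
  have hmem : ∀ z ∈ closedBall (0:ℂ) r, F z ∈ closedBall (0:ℂ) r := by
    intro z hz
    rw [mem_closedBall, dist_zero_right]
    calc ‖F z‖ ≤ ρ * ‖z‖ := hcontr z hz
      _ ≤ 1 * r := by nlinarith [hnorm z hz, norm_nonneg z]
      _ = r := one_mul r
  have hiter : ∀ n : ℕ, ∀ z ∈ closedBall (0:ℂ) r,
      F^[n] z ∈ closedBall (0:ℂ) r ∧ ‖F^[n] z‖ ≤ ρ ^ n * ‖z‖ := by
    intro n
    induction n with
    | zero => intro z hz; simpa using hz
    | succ n ih =>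
      intro z hz
      obtain ⟨hm, hb⟩ := ih z hz
      rw [Function.iterate_succ_apply']
      refine ⟨hmem _ hm, ?_⟩
      calc ‖F (F^[n] z)‖ ≤ ρ * ‖F^[n] z‖ := hcontr _ hm
        _ ≤ ρ * (ρ^n * ‖z‖) := by nlinarith
        _ = ρ^(n+1) * ‖z‖ := by ring
  set ψN : ℕ → ℂ → ℂ := fun n z => F^[n] z / μ^n with hψNdef
  set d : ℕ → ℂ → ℂ := fun n z => ψN (n+1) z - ψN n z with hddef
  set q := ρ^2 / a with hqdef
  have hq0 : 0 ≤ q := by positivity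
  have hq1 : q < 1 := by rw [hqdef, div_lt_one ha0]; exact hρ2a
  set u : ℕ → ℝ := fun n => (C * r^2 / a) * q^n with hudef
  have hdbound : ∀ (n : ℕ) (z : ℂ), z ∈ closedBall (0:ℂ) r → ‖d n z‖ ≤ u n := by
    intro n z hz
    obtain ⟨hm, hb⟩ := hiter n z hz
    have key : d n z = (F (F^[n] z) - μ * F^[n] z) / μ^(n+1) := by
      rw [hddef]
      simp only [hψNdef, Function.iterate_succ_apply']
      rw [div_sub_div _ _ (pow_ne_zero (n+1) hμ0) (pow_ne_zero n hμ0),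
        div_eq_div_iff (mul_ne_zero (pow_ne_zero (n+1) hμ0) (pow_ne_zero n hμ0))
          (pow_ne_zero (n+1) hμ0)]
      ring
    rw [key, norm_div, norm_pow, hna]
    have h1 : ‖F (F^[n] z) - μ * F^[n] z‖ ≤ C * ‖F^[n] z‖^2 := (hrball _ hm).1
    have h3 : ‖F^[n] z‖ ≤ ρ^n * r := by
      nlinarith [hnorm z hz, pow_nonneg hρ0.le n, norm_nonneg (F^[n] z)]
    have h4 : ‖F (F^[n] z) - μ * F^[n] z‖ ≤ C * (ρ^n * r)^2 := by
      have hs := pow_le_pow_left₀ (norm_nonneg (F^[n] z)) h3 2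
      exact h1.trans (mul_le_mul_of_nonneg_left hs hC1.le)
    rw [div_le_iff₀ (by positivity)]
    calc ‖F (F^[n] z) - μ * F^[n] z‖ ≤ C * (ρ^n * r)^2 := h4
      _ = u n * a^(n+1) := by
        simp only [hudef, hqdef]
        rw [mul_pow, ← pow_mul, div_pow, ← pow_mul]
        field_simp
        ring
  have hu_sum : Summable u := (summable_geometric_of_lt_one hq0 hq1).mul_left _
  have htuo := tendstoUniformlyOn_tsum_nat hu_sum hdbound
  set T : ℂ → ℂ := fun z => ∑' n, d n z with hTdef
  set ψ : ℂ → ℂ := fun z => z + T z with hψdef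
  have htel : ∀ (N : ℕ) (z : ℂ), (∑ n ∈ Finset.range N, d n z) = ψN N z - z := by
    intro N z
    rw [hddef]
    rw [Finset.sum_range_sub (f := fun n => ψN n z)]
    simp [hψNdef]
  have htuoψ : TendstoUniformlyOn (fun N z => ψN N z) ψ atTop (closedBall (0:ℂ) r) := by
    rw [Metric.tendstoUniformlyOn_iff] at htuo ⊢
    intro δ hδ
    filter_upwards [htuo δ hδ] with N hN z hz
    have h := hN z hz
    rw [htel] at h
    have heq : dist (ψ z) (ψN N z) = dist (T z) (ψN N z - z) := by
      rw [hψdef]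
      simp only [dist_eq_norm]
      congr 1
      ring
    rw [heq]
    exact h
  have hFdiff : ∀ z ∈ closedBall (0:ℂ) r, DifferentiableAt ℂ F z :=
    fun z hz => ((hrball z hz).2).differentiableAt
  have hiterdiff : ∀ (N : ℕ), ∀ z ∈ closedBall (0:ℂ) r, DifferentiableAt ℂ (F^[N]) z := by
    intro N
    induction N with
    | zero => intro z hz; simpa using differentiableAt_id
    | succ N ih =>
      intro z hz
      rw [Function.iterate_succ']
      exact DifferentiableAt.comp z (hFdiff _ (hiter N z hz).1) (ih z hz)
  have hdiffN : ∀ N : ℕ, DifferentiableOn ℂ (fun z => ψN N z) (ball (0:ℂ) r) := by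
    intro N z hz
    exact (((hiterdiff N z (ball_subset_closedBall hz))).div_const _).differentiableWithinAt
  have htlu : TendstoLocallyUniformlyOn (fun N z => ψN N z) ψ atTop (ball (0:ℂ) r) :=
    htuoψ.tendstoLocallyUniformlyOn.mono ball_subset_closedBall
  have hψdiff : DifferentiableOn ℂ ψ (ball (0:ℂ) r) :=
    htlu.differentiableOn (Eventually.of_forall hdiffN) isOpen_ball
  have hψan : AnalyticAt ℂ ψ 0 :=
    hψdiff.analyticAt (isOpen_ball.mem_nhds (mem_ball_self hr0))
  have hψN0 : ∀ N, ψN N 0 = 0 := by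
    intro N
    simp [hψNdef, Function.iterate_fixed h0]
  have hψ0 : ψ 0 = 0 := by
    rw [hψdef]
    simp only
    rw [hTdef]
    have hd0 : ∀ n, d n 0 = 0 := by intro n; rw [hddef]; simp [hψN0]
    simp [hd0]
  have hFit : ∀ N : ℕ, HasDerivAt (F^[N]) (μ^N) 0 := by
    intro N
    induction N with
    | zero => simpa using hasDerivAt_id (0:ℂ)
    | succ N ih =>
      rw [Function.iterate_succ']
      have hFat : HasDerivAt F μ 0 := hp.analyticAt.differentiableAt.hasDerivAt
      have hF0 : HasDerivAt F μ (F^[N] 0) := by rwa [Function.iterate_fixed h0]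
      have h := hF0.comp 0 ih
      simpa [pow_succ, mul_comm] using h
  have hderivN : ∀ N : ℕ, deriv (fun z => ψN N z) 0 = 1 := by
    intro N
    have h : HasDerivAt (fun z => ψN N z) (μ^N / μ^N) 0 := (hFit N).div_const _
    rw [div_self (pow_ne_zero N hμ0)] at h
    exact h.deriv
  have hψderiv : deriv ψ 0 = 1 := by
    have h1 := (htlu.deriv (Eventually.of_forall hdiffN) isOpen_ball).tendsto_at
      (mem_ball_self hr0)
    have h2 : Tendsto (fun N => deriv (fun z => ψN N z) 0) atTop (nhds (deriv ψ 0)) := h1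
    rw [show (fun N => deriv (fun z => ψN N z) 0) = fun _ => (1:ℂ) from funext hderivN] at h2
    exact (tendsto_const_nhds_iff.mp h2).symm
  refine ⟨ψ, hψan, hψ0, hψderiv, ?_⟩
  filter_upwards [closedBall_mem_nhds (0:ℂ) hr0] with z hz
  have h1 : Tendsto (fun N => ψN N (F z)) atTop (nhds (ψ (F z))) := htuoψ.tendsto_at (hmem z hz)
  have h2 : Tendsto (fun N => ψN N z) atTop (nhds (ψ z)) := htuoψ.tendsto_at hz
  have h3 : ∀ N : ℕ, ψN N (F z) = μ * ψN (N+1) z := by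
    intro N
    simp only [hψNdef, ← Function.iterate_succ_apply]
    rw [pow_succ]
    field_simp
  rw [show (fun N => ψN N (F z)) = fun N => μ * ψN (N+1) z from funext h3] at h1
  have h4 : Tendsto (fun N => μ * ψN (N+1) z) atTop (nhds (μ * ψ z)) :=
    (h2.comp (tendsto_add_atTop_nat 1)).const_mul μ
  exact tendsto_nhds_unique h1 h4

lemma koenigs (F : ℂ → ℂ) (z₀ : ℂ) (hF : AnalyticAt ℂ F z₀) (h0 : F z₀ = z₀)
    (hμ0 : deriv F z₀ ≠ 0) (hμ1 : ‖deriv F z₀‖ < 1) :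
    ∃ ψ : ℂ → ℂ, AnalyticAt ℂ ψ z₀ ∧ ψ z₀ = 0 ∧ deriv ψ z₀ = 1 ∧
      ∀ᶠ z in nhds z₀, ψ (F z) = deriv F z₀ * ψ z := by
  set F' : ℂ → ℂ := fun z => F (z + z₀) - z₀ with hF'def
  have htr : AnalyticAt ℂ (fun z : ℂ => z + z₀) 0 := analyticAt_id.add analyticAt_const
  have hF'an : AnalyticAt ℂ F' 0 := by
    have : AnalyticAt ℂ (F ∘ fun z : ℂ => z + z₀) 0 :=
      AnalyticAt.comp (by simpa using hF) htr
    exact this.sub analyticAt_const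
  have hF'0 : F' 0 = 0 := by simp [hF'def, h0]
  have hFd : HasDerivAt F (deriv F z₀) z₀ := hF.differentiableAt.hasDerivAt
  have hinner : HasDerivAt (fun z : ℂ => z + z₀) 1 0 := (hasDerivAt_id 0).add_const z₀
  have hF'd : HasDerivAt F' (deriv F z₀) 0 := by
    have h1 : HasDerivAt F (deriv F z₀) ((fun z : ℂ => z + z₀) 0) := by simpa using hFd
    have h2 := (h1.comp 0 hinner).sub_const z₀
    simpa [hF'def] using h2
  have hd' : deriv F' 0 = deriv F z₀ := hF'd.deriv
  obtain ⟨ψ', han, h0', hder, heq⟩ := koenigs0 F' hF'an hF'0 (hd' ▸ hμ0) (hd' ▸ hμ1)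
  refine ⟨fun z => ψ' (z - z₀), ?_, by simpa using h0', ?_, ?_⟩
  · have : AnalyticAt ℂ (ψ' ∘ fun z : ℂ => z - z₀) z₀ :=
      AnalyticAt.comp (by simpa using han) (analyticAt_id.sub analyticAt_const)
    exact this
  · have hψd : HasDerivAt ψ' 1 (z₀ - z₀) := by
      have := han.differentiableAt.hasDerivAt
      rw [hder] at this
      simpa using this
    have hsub : HasDerivAt (fun z : ℂ => z - z₀) 1 z₀ := (hasDerivAt_id z₀).sub_const z₀
    have h2 : HasDerivAt (ψ' ∘ fun z : ℂ => z - z₀) (1 * 1) z₀ :=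
      HasDerivAt.comp z₀ hψd hsub
    have h2d := h2.deriv
    rw [one_mul] at h2d
    exact h2d
  · have hct : Tendsto (fun z : ℂ => z - z₀) (nhds z₀) (nhds 0) := by
      have h : Tendsto (fun z : ℂ => z - z₀) (nhds z₀) (nhds (z₀ - z₀)) :=
        Filter.Tendsto.sub tendsto_id tendsto_const_nhds
      simpa using h
    filter_upwards [hct.eventually heq] with z hz
    have : F' (z - z₀) = F z - z₀ := by simp [hF'def]
    rw [this, hd'] at hz
    exact hz

lemma anti_koenigs_attract (z₀ : ℂ) (g : ℂ → ℂ)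
    (hg : AnalyticAt ℂ g ((starRingEnd ℂ) z₀))
    (hfix : g ((starRingEnd ℂ) z₀) = z₀)
    (hL0 : ‖deriv g ((starRingEnd ℂ) z₀)‖ ≠ 0)
    (hL1 : ‖deriv g ((starRingEnd ℂ) z₀)‖ < 1) :
    ∃ φ : ℂ → ℂ, AnalyticAt ℂ φ z₀ ∧ φ z₀ = 0 ∧ ‖deriv φ z₀‖ = 1 ∧
      ∀ᶠ z in nhds z₀,
        φ (g ((starRingEnd ℂ) z))
          = ((‖deriv g ((starRingEnd ℂ) z₀)‖ : ℂ)) * (starRingEnd ℂ) (φ z) := by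
  set w₀ := conj z₀ with hw₀
  set l := deriv g w₀ with hldef
  have hl0 : l ≠ 0 := fun h => hL0 (by rw [h]; simp)
  set L : ℝ := ‖l‖ with hLdef
  have hLpos : 0 < L := norm_pos_iff.mpr hl0
  have hLC : (L : ℂ) ≠ 0 := by exact_mod_cast hLpos.ne'
  have hgd : HasDerivAt g l w₀ := hg.differentiableAt.hasDerivAt
  -- the holomorphic second iterate F = f ∘ f
  set G : ℂ → ℂ := fun z => conj (g (conj z)) with hGdef
  have hGan : AnalyticAt ℂ G z₀ := by
    have := analyticAt_conjconj hg
    rwa [show conj w₀ = z₀ by simp [hw₀]] at this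
  have hGz₀ : G z₀ = w₀ := by
    rw [hGdef]
    simp only
    rw [show conj z₀ = w₀ from rfl, hfix]
  have hGd : HasDerivAt G (conj l) z₀ := by
    have := hasDerivAt_conjconj hgd
    rwa [show conj w₀ = z₀ by simp [hw₀]] at this
  set F : ℂ → ℂ := fun z => g (conj (g (conj z))) with hFdef
  have hFan : AnalyticAt ℂ F z₀ := by
    have h1 : AnalyticAt ℂ (g ∘ G) z₀ := AnalyticAt.comp (by rwa [hGz₀]) hGan
    exact h1
  have hF0 : F z₀ = z₀ := by
    have : F z₀ = g (G z₀) := rfl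
    rw [this, hGz₀, hfix]
  have hFd : HasDerivAt F (l * conj l) z₀ := by
    have h1 : HasDerivAt g l (G z₀) := by rwa [hGz₀]
    exact HasDerivAt.comp z₀ h1 hGd
  have hFderiv : deriv F z₀ = l * conj l := hFd.deriv
  have hμabs : ‖l * conj l‖ = L^2 := by
    rw [norm_mul, Complex.norm_conj, ← hLdef]; ring
  have hμ0 : deriv F z₀ ≠ 0 := by
    rw [hFderiv]
    exact mul_ne_zero hl0 (by simpa using hl0)
  have hμ1 : ‖deriv F z₀‖ < 1 := by
    rw [hFderiv, hμabs]
    nlinarith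
  obtain ⟨ψ, hψan, hψ0, hψd, hψeq⟩ := koenigs F z₀ hFan hF0 hμ0 hμ1
  rw [hFderiv] at hψeq
  have hμreal : l * conj l = ((L:ℂ))^2 := by
    rw [Complex.mul_conj, Complex.normSq_eq_norm_sq, ← hLdef]
    push_cast
    ring
  -- square root unit c with c^2 = conj l / L
  set u : ℂ := conj l / (L:ℂ) with hudef
  have hu0 : u ≠ 0 := div_ne_zero (by simpa using hl0) hLC
  have huabs : ‖u‖ = 1 := by
    rw [hudef, norm_div, Complex.norm_conj, ← hLdef]
    simp [abs_of_pos hLpos, hLpos.ne']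
  obtain ⟨c, hc2⟩ : ∃ c : ℂ, c^2 = u := ⟨u ^ ((2:ℕ):ℂ)⁻¹, Complex.cpow_nat_inv_pow u two_ne_zero⟩
  have hcabs : ‖c‖ = 1 := by
    have h1 : ‖c‖^2 = 1 := by rw [← norm_pow, hc2, huabs]
    nlinarith [norm_nonneg c]
  have hcc : conj c * c = 1 := by
    have h := Complex.mul_conj c
    rw [Complex.normSq_eq_norm_sq, hcabs] at h
    rw [mul_comm] at h
    simpa using h
  have hcu : conj c * u = c := by
    rw [← hc2, pow_two, ← mul_assoc, hcc, one_mul]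
  set χ : ℂ → ℂ := fun z => conj (ψ (g (conj z))) with hχdef
  have hψgan : AnalyticAt ℂ (fun w => ψ (g w)) w₀ := AnalyticAt.comp (by rwa [hfix]) hg
  have hχan : AnalyticAt ℂ χ z₀ := by
    have h := analyticAt_conjconj (h := fun w => ψ (g w)) hψgan
    rwa [show conj w₀ = z₀ by simp [hw₀]] at h
  have hχ0 : χ z₀ = 0 := by
    rw [hχdef]
    simp only
    rw [show conj z₀ = w₀ from rfl, hfix, hψ0, map_zero]
  have hψd1 : HasDerivAt ψ 1 z₀ := by
    have h := hψan.differentiableAt.hasDerivAt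
    rwa [hψd] at h
  have hψgd : HasDerivAt (fun w => ψ (g w)) (1 * l) w₀ := by
    have h1 : HasDerivAt ψ 1 (g w₀) := by rwa [hfix]
    exact HasDerivAt.comp w₀ h1 hgd
  have hχd : HasDerivAt χ (conj (1 * l)) z₀ := by
    have h := hasDerivAt_conjconj hψgd
    rwa [show conj w₀ = z₀ by simp [hw₀]] at h
  set k : ℂ := conj c / (2 * (L:ℂ)) with hkdef
  set φ : ℂ → ℂ := fun z => (c/2) * ψ z + k * χ z with hφdef
  have hφan : AnalyticAt ℂ φ z₀ := (analyticAt_const.mul hψan).add (analyticAt_const.mul hχan)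
  have hφ0 : φ z₀ = 0 := by rw [hφdef]; simp [hψ0, hχ0]
  have hφd : HasDerivAt φ ((c/2) * 1 + k * conj (1 * l)) z₀ :=
    ((hψd1.const_mul (c/2)).add (hχd.const_mul k))
  have h2cl : conj c * conj l = c * (L:ℂ) := by
    have h := hcu
    rw [hudef, ← mul_div_assoc, div_eq_iff hLC] at h
    exact h
  have hφderiv : deriv φ z₀ = c := by
    rw [hφd.deriv, hkdef]
    have h : conj c / (2*(L:ℂ)) * conj ((1:ℂ) * l) = c / 2 := by
      rw [one_mul, div_mul_eq_mul_div, h2cl,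
        show c * (L:ℂ) = (L:ℂ) * c by ring, show (2:ℂ) * (L:ℂ) = (L:ℂ) * 2 by ring,
        mul_div_mul_left _ _ hLC]
    rw [h]
    ring
  refine ⟨φ, hφan, hφ0, by rw [hφderiv, hcabs], ?_⟩
  filter_upwards [hψeq] with z hz
  have e1 : χ (g (conj z)) = conj (l * conj l) * conj (ψ z) := by
    rw [hχdef]
    simp only
    rw [show (g (conj (g (conj z)))) = F z from rfl, hz, map_mul]
  have hll : conj (l * conj l) = ((L:ℂ))^2 := by
    rw [map_mul, conj_conj, mul_comm]; exact hμreal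
  simp only [hφdef]
  rw [e1, hll, hkdef]
  simp only [map_add, map_mul, map_div₀, conj_conj, Complex.conj_ofReal, map_ofNat]
  simp only [hχdef, conj_conj]
  field_simp
  ring


open scoped ContDiff

/-- Anti-holomorphic Koenigs linearization: an anti-analytic map `f z = g (conj z)`
with fixed point `z₀` and real multiplier `L = |deriv g (conj z₀)| ∉ {0, 1}` is locally
conjugate to `z ↦ L · conj z` via an analytic map `φ` with `φ z₀ = 0`, `|deriv φ z₀| = 1`. -/
theorem stmt2 (z₀ : ℂ) (g : ℂ → ℂ)
    (hg : AnalyticAt ℂ g ((starRingEnd ℂ) z₀))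
    (hfix : g ((starRingEnd ℂ) z₀) = z₀)
    (hL0 : ‖deriv g ((starRingEnd ℂ) z₀)‖ ≠ 0)
    (hL1 : ‖deriv g ((starRingEnd ℂ) z₀)‖ ≠ 1) :
    ∃ φ : ℂ → ℂ, AnalyticAt ℂ φ z₀ ∧ φ z₀ = 0 ∧ ‖deriv φ z₀‖ = 1 ∧
      ∀ᶠ z in nhds z₀,
        φ (g ((starRingEnd ℂ) z))
          = ((‖deriv g ((starRingEnd ℂ) z₀)‖ : ℂ)) * (starRingEnd ℂ) (φ z) := by
  rcases lt_or_gt_of_ne hL1 with hlt | hgt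
  · exact anti_koenigs_attract z₀ g hg hfix hL0 hlt
  · have hl0 : deriv g ((starRingEnd ℂ) z₀) ≠ 0 := fun h => hL0 (by rw [h]; simp)
    have hgd : HasDerivAt g (deriv g (conj z₀)) (conj z₀) := hg.differentiableAt.hasDerivAt
    set e : ℂ ≃L[ℂ] ℂ := ContinuousLinearEquiv.unitsEquivAut ℂ (Units.mk0 _ hl0) with hedef
    have hcoe : (e : ℂ →L[ℂ] ℂ)
        = ContinuousLinearMap.smulRight (1 : ℂ →L[ℂ] ℂ) (deriv g (conj z₀)) := by
      ext x
      simp [hedef, ContinuousLinearEquiv.unitsEquivAut]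
    have hf' : HasFDerivAt g (e : ℂ →L[ℂ] ℂ) (conj z₀) := by
      rw [hcoe]; exact hgd.hasFDerivAt
    have hcd : ContDiffAt ℂ ω g (conj z₀) := hg.contDiffAt
    set ginv := hcd.localInverse hf' (by simp) with hginvdef
    have hleft : ∀ᶠ x in nhds (conj z₀), ginv (g x) = x :=
      (hcd.hasStrictFDerivAt' hf' (by simp)).eventually_left_inverse
    have hginv_cd : ContDiffAt ℂ ω ginv z₀ := by
      have := hcd.to_localInverse hf' (by simp)
      rwa [hfix] at this
    have hginv_an : AnalyticAt ℂ ginv z₀ := hginv_cd.analyticAt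
    have hginv0 : ginv z₀ = conj z₀ := by
      have := hcd.localInverse_apply_image hf' (by simp)
      rwa [hfix] at this
    have hinvd : deriv ginv z₀ * deriv g (conj z₀) = 1 := by
      have hgi : HasDerivAt ginv (deriv ginv z₀) (g (conj z₀)) := by
        rw [hfix]; exact hginv_an.differentiableAt.hasDerivAt
      have hcomp : HasDerivAt (ginv ∘ g) (deriv ginv z₀ * deriv g (conj z₀)) (conj z₀) :=
        HasDerivAt.comp _ hgi hgd
      have hid' : HasDerivAt (id : ℂ → ℂ) (deriv ginv z₀ * deriv g (conj z₀)) (conj z₀) := by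
        apply hcomp.congr_of_eventuallyEq
        filter_upwards [hleft] with x hx
        exact hx.symm
      exact ((hasDerivAt_id (conj z₀)).unique hid').symm
    set h : ℂ → ℂ := fun u => conj (ginv (conj u)) with hhdef
    have hhan : AnalyticAt ℂ h (conj z₀) := analyticAt_conjconj hginv_an
    have hhfix : h (conj z₀) = z₀ := by
      rw [hhdef]
      simp only
      rw [conj_conj, hginv0, conj_conj]
    have hhd : HasDerivAt h (conj (deriv ginv z₀)) (conj z₀) :=
      hasDerivAt_conjconj hginv_an.differentiableAt.hasDerivAt
    have hhderiv : deriv h (conj z₀) = conj (deriv ginv z₀) := hhd.deriv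
    have habs : ‖deriv h (conj z₀)‖
        = (‖deriv g ((starRingEnd ℂ) z₀)‖)⁻¹ := by
      rw [hhderiv, Complex.norm_conj]
      have hmul : ‖deriv ginv z₀‖ * ‖deriv g (conj z₀)‖ = 1 := by
        rw [← norm_mul, hinvd]; simp
      field_simp
      linear_combination hmul
    have hh0 : ‖deriv h ((starRingEnd ℂ) z₀)‖ ≠ 0 := by
      rw [habs]; simp [hL0]
    have hh1 : ‖deriv h ((starRingEnd ℂ) z₀)‖ < 1 := by
      rw [habs]
      exact inv_lt_one_of_one_lt₀ hgt
    obtain ⟨φ, hφan, hφ0, hφd, hφeq⟩ := anti_koenigs_attract z₀ h hhan hhfix hh0 hh1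
    refine ⟨φ, hφan, hφ0, hφd, ?_⟩
    rw [habs] at hφeq
    have hf_tendsto : Tendsto (fun z => g (conj z)) (nhds z₀) (nhds z₀) := by
      have h1 : ContinuousAt g (conj z₀) := hg.continuousAt
      have h2 : Tendsto (fun z : ℂ => conj z) (nhds z₀) (nhds (conj z₀)) :=
        Complex.continuous_conj.tendsto z₀
      have h3 := h1.tendsto.comp h2
      rwa [hfix] at h3
    have hconj_tendsto : Tendsto (fun z : ℂ => conj z) (nhds z₀) (nhds (conj z₀)) :=
      Complex.continuous_conj.tendsto z₀
    filter_upwards [hf_tendsto.eventually hφeq, hconj_tendsto.eventually hleft] with z h1 h2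
    have e2 : h (conj (g (conj z))) = z := by
      rw [hhdef]
      simp only
      rw [conj_conj, h2, conj_conj]
    rw [e2] at h1
    have hLC : ((‖deriv g ((starRingEnd ℂ) z₀)‖:ℝ) : ℂ) ≠ 0 := by
      exact_mod_cast hL0
    have h3 : conj (φ (g (conj z)))
        = ((‖deriv g ((starRingEnd ℂ) z₀)‖ : ℝ) : ℂ) * φ z := by
      rw [h1, Complex.ofReal_inv]
      field_simp
    have h4 := congrArg conj h3
    rw [conj_conj, map_mul, Complex.conj_ofReal] at h4
    exact h4
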